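/- Let ι be an index set, (X_i)_{i∈ι} a family of complex Banach spaces, and let 𝔛 denote their ℓ¹-direct sum (the space lp X 1), with ι_j : X_j → 𝔛 the canonical isometric inclusion of the j-th summand. Fix an integer n ≥ 1, a constant C > 0, and a complex Banach space E. Suppose that for each n-tuple k = (k₁,…,kₙ) ∈ ιⁿ we are given a function g_k : X_{k₁} × ⋯ × X_{kₙ} → E. Then the following are equivalent: (a) there exists a continuous n-multilinear map T : 𝔛 × ⋯ × 𝔛 → E with ‖T‖ ≤ C such that T(ι_{k₁}(x₁),…,ι_{kₙ}(xₙ)) = g_k(x₁,…,xₙ) for every k ∈ ιⁿ and all x_j ∈ X_{k_j}; (b) for every k ∈ ιⁿ, the function g_k is (the underlying function of) a continuous n-multilinear map X_{k₁} × ⋯ × X_{kₙ} → E of norm at most C. -/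

import Mathlib

open scoped ENNReal

set_option linter.unusedSectionVars false
set_option linter.unusedVariables false
set_option maxHeartbeats 1000000

section aux

variable {ι : Type*} [DecidableEq ι] (X : ι → Type*)
    [∀ i, NormedAddCommGroup (X i)] [∀ i, NormedSpace ℂ (X i)]

theorem one_toReal_pos : (0:ℝ) < (1 : ℝ≥0∞).toReal := by norm_num

/-- `lp.single` as a continuous linear map. -/
noncomputable def lpSingleCLM (i : ι) : X i →L[ℂ] lp X 1 :=
  LinearMap.mkContinuous
    { toFun := lp.single 1 i
      map_add' := fun a b => by
        ext j
        by_cases h : j = i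
        · subst h; simp [lp.single_apply_self]
        · simp [lp.single_apply_ne _ _ _ h]
      map_smul' := fun c a => by
        simp [lp.single_smul] }
    1 (fun a => by
      have := lp.norm_single (E := X) (p := 1) zero_lt_one i a
      simp [this])

theorem lpSingleCLM_apply (i : ι) (a : X i) : lpSingleCLM X i a = lp.single 1 i a := rfl

theorem norm_lpSingleCLM_le (i : ι) : ‖lpSingleCLM X i‖ ≤ 1 :=
  LinearMap.mkContinuous_norm_le _ zero_le_one _

/-- `ℓ¹` norm as a `HasSum`. -/
theorem l1_hasSum_norm (f : lp X 1) : HasSum (fun i => ‖f i‖) ‖f‖ := by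
  have := lp.hasSum_norm (E := X) one_toReal_pos f
  simpa using this

theorem l1_sum_le {s : Finset ι} (f : lp X 1) : ∑ i ∈ s, ‖f i‖ ≤ ‖f‖ :=
  sum_le_hasSum s (fun i _ => norm_nonneg _) (l1_hasSum_norm X f)

variable {n : ℕ}

theorem l1_prod_sum_le (u : Fin n → lp X 1) (s : Finset (Fin n → ι)) :
    ∑ k ∈ s, ∏ j, ‖u j (k j)‖ ≤ ∏ j, ‖u j‖ := by
  have hsub : s ⊆ Fintype.piFinset (fun j => s.image (fun k => k j)) := by
    intro k hk
    simp only [Fintype.mem_piFinset, Finset.mem_image]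
    exact fun j => ⟨k, hk, rfl⟩
  calc ∑ k ∈ s, ∏ j, ‖u j (k j)‖
      ≤ ∑ k ∈ Fintype.piFinset (fun j => s.image (fun k => k j)), ∏ j, ‖u j (k j)‖ :=
        Finset.sum_le_sum_of_subset_of_nonneg hsub
          (fun k _ _ => Finset.prod_nonneg fun j _ => norm_nonneg _)
    _ = ∏ j, ∑ i ∈ s.image (fun k => k j), ‖u j i‖ := by
        rw [Finset.prod_univ_sum]
    _ ≤ ∏ j, ‖u j‖ := Finset.prod_le_prod
        (fun j _ => Finset.sum_nonneg fun i _ => norm_nonneg _)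
        (fun j _ => l1_sum_le X _)

/-- Summability with bound of the product family. -/
theorem prod_summable (u : Fin n → lp X 1) :
    Summable (fun k : Fin n → ι => ∏ j, ‖u j (k j)‖) :=
  summable_of_sum_le (c := ∏ j, ‖u j‖)
    (fun k => Finset.prod_nonneg fun j _ => norm_nonneg _) (l1_prod_sum_le X u)

theorem prod_tsum_le (u : Fin n → lp X 1) :
    ∑' k : Fin n → ι, ∏ j, ‖u j (k j)‖ ≤ ∏ j, ‖u j‖ :=
  Summable.tsum_le_of_sum_le (prod_summable X u) (l1_prod_sum_le X u)

variable {E : Type*} [NormedAddCommGroup E] [NormedSpace ℂ E] [CompleteSpace E] {C : ℝ}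
variable {M : ∀ k : Fin n → ι, ContinuousMultilinearMap ℂ (fun j => X (k j)) E}

theorem term_norm_le (hM : ∀ k, ‖M k‖ ≤ C) (u : Fin n → lp X 1) (k : Fin n → ι) :
    ‖M k (fun j => u j (k j))‖ ≤ C * ∏ j, ‖u j (k j)‖ :=
  ((M k).le_opNorm _).trans
    (mul_le_mul_of_nonneg_right (hM k) (Finset.prod_nonneg fun j _ => norm_nonneg _))

theorem term_norm_summable (hM : ∀ k, ‖M k‖ ≤ C) (u : Fin n → lp X 1) :
    Summable (fun k : Fin n → ι => ‖M k (fun j => u j (k j))‖) :=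
  Summable.of_nonneg_of_le (fun k => norm_nonneg _) (term_norm_le X hM u)
    ((prod_summable X u).mul_left C)

theorem term_summable (hM : ∀ k, ‖M k‖ ≤ C) (u : Fin n → lp X 1) :
    Summable (fun k : Fin n → ι => M k (fun j => u j (k j))) :=
  (term_norm_summable X hM u).of_norm

theorem update_eq (u : Fin n → lp X 1) (i : Fin n) (v : lp X 1) (k : Fin n → ι) :
    (fun j => (Function.update u i v j) (k j))
      = Function.update (fun j => u j (k j)) i (v (k i)) := by
  funext j
  exact Function.apply_update (fun j (w : lp X 1) => w (k j)) u i v j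

/-- The multilinear extension to the ℓ¹ sum. -/
noncomputable def bigF (hM : ∀ k, ‖M k‖ ≤ C) :
    MultilinearMap ℂ (fun _ : Fin n => lp X 1) E where
  toFun u := ∑' k : Fin n → ι, M k (fun j => u j (k j))
  map_update_add' := by
    intro dec u i x y
    have hdec : dec = instDecidableEqFin n := Subsingleton.elim _ _
    subst hdec
    have key : ∀ v : lp X 1,
        ∑' k : Fin n → ι, M k (fun j => Function.update u i v j (k j))
          = ∑' k : Fin n → ι,
              M k (Function.update (fun j => u j (k j)) i (v (k i))) :=
      fun v => tsum_congr fun k => by rw [update_eq X u i v k]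
    have hsum : ∀ v : lp X 1,
        Summable (fun k : Fin n → ι =>
          M k (Function.update (fun j => u j (k j)) i (v (k i)))) := by
      intro v
      refine (term_summable X hM (Function.update u i v)).congr fun k => ?_
      rw [update_eq X u i v k]
    beta_reduce
    rw [key (x + y), key x, key y, ← Summable.tsum_add (hsum x) (hsum y)]
    refine tsum_congr fun k => ?_
    have hxy : (((x + y : lp X 1) : ∀ i, X i) (k i)) = x (k i) + y (k i) := rfl
    rw [hxy, (M k).map_update_add]
  map_update_smul' := by
    intro dec u i c x
    have hdec : dec = instDecidableEqFin n := Subsingleton.elim _ _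
    subst hdec
    have key : ∀ v : lp X 1,
        ∑' k : Fin n → ι, M k (fun j => Function.update u i v j (k j))
          = ∑' k : Fin n → ι,
              M k (Function.update (fun j => u j (k j)) i (v (k i))) :=
      fun v => tsum_congr fun k => by rw [update_eq X u i v k]
    have hsum :
        Summable (fun k : Fin n → ι =>
          M k (Function.update (fun j => u j (k j)) i (x (k i)))) := by
      refine (term_summable X hM (Function.update u i x)).congr fun k => ?_
      rw [update_eq X u i x k]
    beta_reduce
    rw [key (c • x), key x, ← (hsum.hasSum.const_smul c).tsum_eq]
    refine tsum_congr fun k => ?_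
    have hcx : (((c • x : lp X 1) : ∀ i, X i) (k i)) = c • x (k i) := rfl
    rw [hcx, (M k).map_update_smul]

theorem bigF_bound (hM : ∀ k, ‖M k‖ ≤ C) (hC : 0 ≤ C) (u : Fin n → lp X 1) :
    ‖bigF X hM u‖ ≤ C * ∏ j, ‖u j‖ := by
  calc ‖bigF X hM u‖ ≤ ∑' k : Fin n → ι, ‖M k (fun j => u j (k j))‖ :=
        norm_tsum_le_tsum_norm (term_norm_summable X hM u)
    _ ≤ ∑' k : Fin n → ι, C * ∏ j, ‖u j (k j)‖ :=
        Summable.tsum_le_tsum (term_norm_le X hM u) (term_norm_summable X hM u)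
          ((prod_summable X u).mul_left C)
    _ = C * ∑' k : Fin n → ι, ∏ j, ‖u j (k j)‖ := tsum_mul_left
    _ ≤ C * ∏ j, ‖u j‖ := mul_le_mul_of_nonneg_left (prod_tsum_le X u) hC

end aux

instance : Fact ((1 : ℝ≥0∞) ≤ 1) := ⟨le_rfl⟩

/-- Lemma on multilinear extensions to ℓ¹-direct sums: a family of functions on the
components extends to a continuous multilinear map of norm ≤ C on the ℓ¹-sum iff each
member of the family is (the underlying function of) a continuous multilinear map of
norm ≤ C. -/
theorem multilinear_extension_iff
    {ι : Type*} [DecidableEq ι] (X : ι → Type*)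
    [∀ i, NormedAddCommGroup (X i)] [∀ i, NormedSpace ℂ (X i)] [∀ i, CompleteSpace (X i)]
    (n : ℕ) (hn : 1 ≤ n) (C : ℝ) (hC : 0 < C)
    (E : Type*) [NormedAddCommGroup E] [NormedSpace ℂ E] [CompleteSpace E]
    (g : ∀ k : Fin n → ι, (∀ j, X (k j)) → E) :
    (∃ T : ContinuousMultilinearMap ℂ (fun _ : Fin n => lp X 1) E,
        ‖T‖ ≤ C ∧
        ∀ (k : Fin n → ι) (x : ∀ j, X (k j)),
          T (fun j => lp.single 1 (k j) (x j)) = g k x)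
    ↔
    (∀ k : Fin n → ι, ∃ M : ContinuousMultilinearMap ℂ (fun j => X (k j)) E,
        ‖M‖ ≤ C ∧ ∀ x : ∀ j, X (k j), M x = g k x) := by
  constructor
  · rintro ⟨T, hT, hTg⟩ k
    refine ⟨T.compContinuousLinearMap (fun j => lpSingleCLM X (k j)), ?_, ?_⟩
    · calc ‖T.compContinuousLinearMap (fun j => lpSingleCLM X (k j))‖
          ≤ ‖T‖ * ∏ j, ‖lpSingleCLM X (k j)‖ := T.norm_compContinuousLinearMap_le _
        _ ≤ C * 1 := by
            refine mul_le_mul hT ?_ (Finset.prod_nonneg fun j _ => norm_nonneg _) hC.le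
            calc ∏ j, ‖lpSingleCLM X (k j)‖ ≤ ∏ (_ : Fin n), (1:ℝ) :=
                  Finset.prod_le_prod (fun j _ => norm_nonneg _)
                    (fun j _ => norm_lpSingleCLM_le X (k j))
              _ = 1 := by simp
        _ = C := mul_one C
    · intro x
      exact hTg k x
  · intro h
    choose M hM hMg using h
    refine ⟨(bigF X hM).mkContinuous C (bigF_bound X hM hC.le),
      (bigF X hM).mkContinuous_norm_le hC.le (bigF_bound X hM hC.le), ?_⟩
    intro k x
    have heq : (bigF X hM).mkContinuous C (bigF_bound X hM hC.le)
          (fun j => lp.single 1 (k j) (x j))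
        = ∑' k' : Fin n → ι,
            M k' (fun j => (lp.single 1 (k j) (x j) : lp X 1) (k' j)) := rfl
    rw [heq, tsum_eq_single k, ← hMg k x]
    · congr 1
      funext j
      exact lp.single_apply_self 1 (k j) (x j)
    · intro k' hk'
      obtain ⟨j₀, hj₀⟩ : ∃ j, k' j ≠ k j := by
        by_contra hcon
        push_neg at hcon
        exact hk' (funext hcon)
      exact (M k').map_coord_zero j₀ (lp.single_apply_ne 1 (k j₀) (x j₀) hj₀)
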